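/- Let G = Z_{p^r} ⋊_α Z_{q^s} with ord(α) = q^t, and suppose H = ⟨x^a y^{q^j}⟩ with 0 ≤ j < t hidden. For g_1, g_2 ∈ G with g_2^{-1} g_1 = x^u y^v ∈ H and q^t ∤ v, the parameter a is recovered as a ≡ u (α^{q^j} − 1)/(α^v − 1) (mod p^r). -/
import Mathlib

lemma aux_unit (p q r t : ℕ) (hp : p.Prime) (hq : q.Prime) (hpq : p ≠ q) (hr : 0 < r)
    (β : (ZMod (p ^ r))ˣ) (hβord : orderOf β ∣ q ^ t) (hβ1 : β ≠ 1) :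
    IsUnit ((β : ZMod (p ^ r)) - 1) := by
  haveI : NeZero (p ^ r) := ⟨pow_ne_zero _ hp.pos.ne'⟩
  by_contra hnu
  -- p divides the value of β - 1
  set c : ZMod (p ^ r) := (β : ZMod (p ^ r)) - 1 with hc
  have hcv : ((c.val : ℕ) : ZMod (p ^ r)) = c := ZMod.natCast_rightInverse c
  have hncop : ¬ Nat.Coprime c.val (p ^ r) := by
    intro h
    exact hnu (by rw [← hcv]; exact (ZMod.isUnit_iff_coprime _ _).mpr h)
  have hpdvd : p ∣ c.val := by
    by_contra hnd
    exact hncop ((hp.coprime_iff_not_dvd.mpr hnd).symm.pow_right _)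
  -- the reduction map on units
  have hdv : p ∣ p ^ r := dvd_pow_self p hr.ne'
  set f := ZMod.unitsMap hdv with hf
  have hfs : Function.Surjective f := ZMod.unitsMap_surjective hdv
  have hker : β ∈ f.ker := by
    rw [MonoidHom.mem_ker]
    apply Units.ext
    have h0 : ((c.val : ℕ) : ZMod p) = 0 := (ZMod.natCast_eq_zero_iff _ _).mpr hpdvd
    have : (ZMod.castHom hdv (ZMod p)) c = 0 := by rw [← hcv, map_natCast, h0]
    have hβc : (β : ZMod (p ^ r)) = c + 1 := by rw [hc]; ring
    show (ZMod.castHom hdv (ZMod p)) (β : ZMod (p ^ r)) = 1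
    rw [hβc, map_add, map_one, this, zero_add]
  -- cardinality of the kernel
  haveI : Fact p.Prime := ⟨hp⟩
  have hcard1 : Nat.card (ZMod (p ^ r))ˣ = p ^ (r - 1) * (p - 1) := by
    rw [Nat.card_eq_fintype_card, ZMod.card_units_eq_totient, Nat.totient_prime_pow hp hr]
  have hcard2 : Nat.card (ZMod p)ˣ = p - 1 := by
    rw [Nat.card_eq_fintype_card, ZMod.card_units_eq_totient, Nat.totient_prime hp]
  have hquot : Nat.card ((ZMod (p ^ r))ˣ ⧸ f.ker) = p - 1 := by
    rw [Nat.card_congr (QuotientGroup.quotientKerEquivOfSurjective f hfs).toEquiv, hcard2]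
  have hkcard : Nat.card f.ker = p ^ (r - 1) := by
    have := Subgroup.card_eq_card_quotient_mul_card_subgroup f.ker
    rw [hcard1, hquot] at this
    have hp1 : 0 < p - 1 := by have := hp.two_le; omega
    have : (p - 1) * (p ^ (r - 1)) = (p - 1) * Nat.card f.ker := by
      rw [mul_comm (p - 1) (p ^ (r - 1))]; exact this
    exact (Nat.eq_of_mul_eq_mul_left hp1 this).symm
  have hdvd1 : orderOf β ∣ p ^ (r - 1) := hkcard ▸ Subgroup.orderOf_dvd_natCard f.ker hker
  have hcop : Nat.Coprime (p ^ (r - 1)) (q ^ t) :=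
    ((Nat.coprime_primes hp hq).mpr hpq).pow _ _
  have : orderOf β ∣ 1 := Nat.dvd_one.mpr (Nat.eq_one_of_dvd_coprimes hcop hdvd1 hβord)
  exact hβ1 (orderOf_eq_one_iff.mp (Nat.dvd_one.mp this))

theorem stmt_17 (p q r s t : ℕ) (hp : p.Prime) (hq : q.Prime) (hpq : p ≠ q)
    (hpodd : Odd p) (hqodd : Odd q)
    (hr : 0 < r) (hs : 0 < s) (ht : 1 ≤ t) (hts : t ≤ s)
    (G : Type*) [Group G] (x y : G)
    (α : (ZMod (p ^ r))ˣ) (hα : orderOf α = q ^ t)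
    (hx : orderOf x = p ^ r) (hy : orderOf y = q ^ s)
    (hcomm : y * x * y⁻¹ = x ^ ((α : ZMod (p ^ r)).val))
    (hgen : Subgroup.closure {x, y} = ⊤)
    (hcard : Nat.card G = p ^ r * q ^ s) :
    ∀ a u v j : ℕ, j < t → ¬ q ^ t ∣ v →
      x ^ u * y ^ v ∈ Subgroup.zpowers (x ^ a * y ^ q ^ j) →
      (a : ZMod (p ^ r)) =
        (u : ZMod (p ^ r)) * (((α : ZMod (p ^ r)) ^ q ^ j - 1) * ((α : ZMod (p ^ r)) ^ v - 1)⁻¹) := by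
  haveI : NeZero (p ^ r) := ⟨pow_ne_zero _ hp.pos.ne'⟩
  intro a u v j hj hv hmem
  set A : ZMod (p ^ r) := (α : ZMod (p ^ r)) with hA
  set w : ℕ := A.val with hw
  have hwA : ((w : ℕ) : ZMod (p ^ r)) = A := ZMod.natCast_rightInverse A
  -- rewrite x ^ n to x ^ (c.val) when the casts agree
  have hxc : ∀ (n : ℕ) (c : ZMod (p ^ r)), ((n : ℕ) : ZMod (p ^ r)) = c →
      x ^ n = x ^ c.val := by
    intro n c h
    rw [pow_eq_pow_iff_modEq, hx]
    have : ((n : ℕ) : ZMod (p ^ r)) = ((c.val : ℕ) : ZMod (p ^ r)) := by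
      rw [h, ZMod.natCast_rightInverse c]
    exact (ZMod.natCast_eq_natCast_iff _ _ _).mp this
  -- conjugation of powers of x by powers of y
  have hconj1 : ∀ m : ℕ, y * x ^ m * y⁻¹ = x ^ (m * w) := by
    intro m
    rw [← conj_pow, hcomm, ← pow_mul, mul_comm w m]
  have hconj : ∀ (e m : ℕ), y ^ e * x ^ m * (y ^ e)⁻¹ = x ^ (m * w ^ e) := by
    intro e
    induction e with
    | zero => intro m; simp
    | succ e ih =>
      intro m
      have : y ^ (e + 1) * x ^ m * (y ^ (e + 1))⁻¹
          = y * (y ^ e * x ^ m * (y ^ e)⁻¹) * y⁻¹ := by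
        rw [pow_succ']
        group
      rw [this, ih m, hconj1, mul_assoc m, ← pow_succ]
  have hswap : ∀ (e m : ℕ), y ^ e * x ^ m = x ^ (m * w ^ e) * y ^ e := by
    intro e m
    exact mul_inv_eq_iff_eq_mul.mp (hconj e m)
  -- powers of x^a * y^b
  have hpow : ∀ (b k : ℕ), ∃ c : ZMod (p ^ r),
      (x ^ a * y ^ b) ^ k = x ^ c.val * y ^ (b * k) ∧
      c * (A ^ b - 1) = (a : ZMod (p ^ r)) * (A ^ (b * k) - 1) := by
    intro b k
    induction k with
    | zero =>
      refine ⟨0, ?_, by simp⟩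
      simp [ZMod.val_zero]
    | succ k ih =>
      obtain ⟨c, h1, h2⟩ := ih
      refine ⟨(a : ZMod (p ^ r)) + c * A ^ b, ?_, ?_⟩
      · have hcast : ((a + c.val * w ^ b : ℕ) : ZMod (p ^ r))
            = (a : ZMod (p ^ r)) + c * A ^ b := by
          push_cast
          rw [ZMod.natCast_rightInverse c, hwA]
        calc (x ^ a * y ^ b) ^ (k + 1)
            = x ^ a * (y ^ b * x ^ c.val) * y ^ (b * k) := by
              rw [pow_succ', h1]; group
          _ = x ^ a * (x ^ (c.val * w ^ b) * y ^ b) * y ^ (b * k) := by rw [hswap]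
          _ = x ^ (a + c.val * w ^ b) * y ^ (b + b * k) := by
              rw [pow_add, pow_add]; group
          _ = x ^ ((a : ZMod (p ^ r)) + c * A ^ b).val * y ^ (b * (k + 1)) := by
              rw [hxc _ _ hcast, Nat.mul_succ, Nat.add_comm (b * k) b]
      · have he : b * (k + 1) = b * k + b := Nat.mul_succ b k
        rw [he, pow_add]
        linear_combination (A ^ b) * h2
  -- G is finite, extract a natural power
  haveI : Finite G := by
    have : 0 < Nat.card G := by
      rw [hcard]
      exact Nat.mul_pos (pow_pos hp.pos r) (pow_pos hq.pos s)
    exact (Nat.card_pos_iff.mp this).2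
  obtain ⟨k, hk⟩ := ((isOfFinOrder_of_finite (x ^ a * y ^ q ^ j)).mem_powers_iff_mem_zpowers).mpr hmem
  obtain ⟨c, h1, h2⟩ := hpow (q ^ j) k
  replace hk : x ^ c.val * y ^ (q ^ j * k) = x ^ u * y ^ v := by rw [← h1]; exact hk
  -- separate the x and y parts
  have hz : (x ^ u)⁻¹ * x ^ c.val = y ^ v * (y ^ (q ^ j * k))⁻¹ := by
    have h := hk
    have : (x ^ u)⁻¹ * (x ^ c.val * y ^ (q ^ j * k)) * (y ^ (q ^ j * k))⁻¹
        = (x ^ u)⁻¹ * (x ^ u * y ^ v) * (y ^ (q ^ j * k))⁻¹ := by rw [h]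
    calc (x ^ u)⁻¹ * x ^ c.val
        = (x ^ u)⁻¹ * (x ^ c.val * y ^ (q ^ j * k)) * (y ^ (q ^ j * k))⁻¹ := by group
      _ = (x ^ u)⁻¹ * (x ^ u * y ^ v) * (y ^ (q ^ j * k))⁻¹ := this
      _ = y ^ v * (y ^ (q ^ j * k))⁻¹ := by group
  have hzx : (x ^ u)⁻¹ * x ^ c.val ∈ Subgroup.zpowers x :=
    ⟨(c.val : ℤ) - u, by
      show x ^ ((c.val : ℤ) - u) = _
      rw [zpow_sub, zpow_natCast, zpow_natCast]
      exact (((Commute.refl x).pow_pow u c.val).inv_left).eq.symm⟩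
  have hzy : (x ^ u)⁻¹ * x ^ c.val ∈ Subgroup.zpowers y :=
    ⟨(v : ℤ) - (q ^ j * k : ℕ), by
      show y ^ ((v : ℤ) - (q ^ j * k : ℕ)) = _
      rw [zpow_sub, zpow_natCast, zpow_natCast, hz]⟩
  have hone : (x ^ u)⁻¹ * x ^ c.val = 1 := by
    have d1 := orderOf_dvd_of_mem_zpowers hzx
    have d2 := orderOf_dvd_of_mem_zpowers hzy
    rw [hx] at d1
    rw [hy] at d2
    have hcop : Nat.Coprime (p ^ r) (q ^ s) := ((Nat.coprime_primes hp hq).mpr hpq).pow _ _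
    exact orderOf_eq_one_iff.mp (Nat.eq_one_of_dvd_coprimes hcop d1 d2)
  have hxeq : x ^ c.val = x ^ u := (inv_mul_eq_one.mp hone).symm
  have hyeq : y ^ (q ^ j * k) = y ^ v := by
    have : y ^ v * (y ^ (q ^ j * k))⁻¹ = 1 := by rw [← hz, hone]
    exact (mul_inv_eq_one.mp this).symm
  -- convert to congruences
  have huc : ((u : ℕ) : ZMod (p ^ r)) = c := by
    have := (pow_eq_pow_iff_modEq.mp hxeq)
    rw [hx] at this
    rw [← ZMod.natCast_rightInverse c]
    exact ((ZMod.natCast_eq_natCast_iff _ _ _).mpr this).symm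
  have hvmod : (q ^ j * k) ≡ v [MOD q ^ t] := by
    have := pow_eq_pow_iff_modEq.mp hyeq
    rw [hy] at this
    exact this.of_dvd (pow_dvd_pow q hts)
  have hαeq : A ^ (q ^ j * k) = A ^ v := by
    have : α ^ (q ^ j * k) = α ^ v := by
      rw [pow_eq_pow_iff_modEq, hα]; exact hvmod
    have := congrArg (Units.val) this
    simpa using this
  -- main algebra
  have hmain : (u : ZMod (p ^ r)) * (A ^ q ^ j - 1) = (a : ZMod (p ^ r)) * (A ^ v - 1) := by
    rw [huc, h2, hαeq]
  -- invertibility of A ^ v - 1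
  have hβ1 : α ^ v ≠ 1 := by
    intro h
    exact hv (hα ▸ orderOf_dvd_of_pow_eq_one h)
  have hβord : orderOf (α ^ v) ∣ q ^ t := hα ▸ orderOf_pow_dvd v
  have hunit : IsUnit (A ^ v - 1) := by
    have := aux_unit p q r t hp hq hpq hr (α ^ v) hβord hβ1
    simpa using this
  calc (a : ZMod (p ^ r))
      = (a : ZMod (p ^ r)) * ((A ^ v - 1) * (A ^ v - 1)⁻¹) := by
        rw [ZMod.mul_inv_of_unit _ hunit, mul_one]
    _ = ((u : ZMod (p ^ r)) * (A ^ q ^ j - 1)) * (A ^ v - 1)⁻¹ := by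
        rw [hmain]; ring
    _ = (u : ZMod (p ^ r)) * ((A ^ q ^ j - 1) * (A ^ v - 1)⁻¹) := by ring
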